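/- arXiv:1803.08961 — 2 statements merged into one kernel-verified Lean document; each statement's English description precedes it below -/
import Mathlib

section
/- For every h in the Apéry set Ap(H, a_n), the monomial φ_a(h) does not belong to the initial ideal ini_<((x_n) + I(a)). -/
open MvPolynomial

/-- Sum of the exponents of a monomial (its total degree). -/
def degSum {m : ℕ} (u : Fin m →₀ ℕ) : ℕ := ∑ i, u i

/-- The reverse lexicographic order on monomials determined by a ranking permutation `σ`:
`σ i` is the rank of the variable `x i`; the variable of rank `0` is the greatest and the
variable of rank `m-1` is the smallest.  `u < v` iff `deg u < deg v`, or the degrees agree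
and at the differing position of largest rank (i.e. belonging to the smallest variable)
`u` has the larger exponent. -/
def RevLexLt {m : ℕ} (σ : Equiv.Perm (Fin m)) (u v : Fin m →₀ ℕ) : Prop :=
  degSum u < degSum v ∨
    (degSum u = degSum v ∧ ∃ i, v i < u i ∧ ∀ j, σ i < σ j → u j = v j)

/-- Extend a ranking permutation of `Fin m` to `Fin (m+1)` by letting the new
variable (of index `Fin.last m`, playing the role of `x₀`) have the largest rank,
i.e. be the smallest variable. -/
def extPerm {m : ℕ} (σ : Equiv.Perm (Fin m)) : Equiv.Perm (Fin (m + 1)) where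
  toFun := Fin.lastCases (Fin.last m) (fun i => (σ i).castSucc)
  invFun := Fin.lastCases (Fin.last m) (fun i => (σ.symm i).castSucc)
  left_inv := by
    intro x
    induction x using Fin.lastCases with
    | last => simp
    | cast i => simp
  right_inv := by
    intro x
    induction x using Fin.lastCases with
    | last => simp
    | cast i => simp

/-- `u` is the exponent vector of the leading monomial of `f` with respect to the
strict monomial order `lt`. -/
def IsLeadMon {K : Type} [Field K] {m : ℕ} (lt : (Fin m →₀ ℕ) → (Fin m →₀ ℕ) → Prop)
    (f : MvPolynomial (Fin m) K) (u : Fin m →₀ ℕ) : Prop :=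
  MvPolynomial.coeff u f ≠ 0 ∧ ∀ v, MvPolynomial.coeff v f ≠ 0 → v ≠ u → lt v u

/-- The initial ideal of `I` with respect to the monomial order `lt`: the ideal generated by
the leading monomials of the nonzero elements of `I`. -/
noncomputable def iniIdeal {K : Type} [Field K] {m : ℕ} (lt : (Fin m →₀ ℕ) → (Fin m →₀ ℕ) → Prop)
    (I : Ideal (MvPolynomial (Fin m) K)) : Ideal (MvPolynomial (Fin m) K) :=
  Ideal.span {p | ∃ f ∈ I, ∃ u, IsLeadMon lt f u ∧ p = MvPolynomial.monomial u (1 : K)}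

/-- `G` is a (finite) Gröbner basis of `I` w.r.t. `lt`. -/
def IsGB {K : Type} [Field K] {m : ℕ} (lt : (Fin m →₀ ℕ) → (Fin m →₀ ℕ) → Prop)
    (I : Ideal (MvPolynomial (Fin m) K)) (G : Set (MvPolynomial (Fin m) K)) : Prop :=
  G.Finite ∧ G ⊆ (I : Set (MvPolynomial (Fin m) K)) ∧ Ideal.span G = I ∧
    iniIdeal lt I =
      Ideal.span {p | ∃ g ∈ G, ∃ u, IsLeadMon lt g u ∧ p = MvPolynomial.monomial u (1 : K)}

/-- `G` is the reduced Gröbner basis of `I` w.r.t. `lt`: a Gröbner basis consisting of monic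
polynomials such that no monomial occurring in an element of `G` is divisible by the leading
monomial of another element of `G`. -/
def IsReducedGB {K : Type} [Field K] {m : ℕ} (lt : (Fin m →₀ ℕ) → (Fin m →₀ ℕ) → Prop)
    (I : Ideal (MvPolynomial (Fin m) K)) (G : Set (MvPolynomial (Fin m) K)) : Prop :=
  IsGB lt I G ∧
    (∀ g ∈ G, ∃ u, IsLeadMon lt g u ∧ MvPolynomial.coeff u g = 1) ∧
    (∀ g ∈ G, ∀ u, MvPolynomial.coeff u g ≠ 0 →
      ∀ g' ∈ G, g' ≠ g → ∀ v, IsLeadMon lt g' v → ¬ v ≤ u)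

/-- The homogenization `f^h` of a polynomial `f ∈ K[x_1,…,x_m]` with respect to a new
variable `x₀`, which is the variable of index `Fin.last m` in `K[x_1,…,x_m,x₀]`. -/
noncomputable def homogPoly {K : Type} [Field K] {m : ℕ} (f : MvPolynomial (Fin m) K) :
    MvPolynomial (Fin (m + 1)) K :=
  ∑ u ∈ f.support,
    MvPolynomial.monomial
      (Finsupp.mapDomain Fin.castSucc u +
        Finsupp.single (Fin.last m) (f.totalDegree - degSum u))
      (MvPolynomial.coeff u f)

/-- The homogenization of the ideal `I`, generated by the homogenizations of all its
elements. -/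
noncomputable def homogIdeal {K : Type} [Field K] {m : ℕ} (I : Ideal (MvPolynomial (Fin m) K)) :
    Ideal (MvPolynomial (Fin (m + 1)) K) :=
  Ideal.span (homogPoly '' (I : Set (MvPolynomial (Fin m) K)))

/-- The toric ideal `I(a)`: the kernel of the `K`-algebra map `K[x_1,…,x_m] → K[t]`,
`x_i ↦ t^{a_i}`. -/
noncomputable def toricIdeal (K : Type) [Field K] {m : ℕ} (a : Fin m → ℕ) :
    Ideal (MvPolynomial (Fin m) K) :=
  RingHom.ker (MvPolynomial.aeval (fun i => (Polynomial.X : Polynomial K) ^ a i)).toRingHom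

set_option synthInstance.maxHeartbeats 1000000 in
/-- A homogeneous ideal `I` of a polynomial ring `S` over a field is a Cohen-Macaulay ideal
(equivalently, `S/I` is a Cohen-Macaulay ring) iff there is a regular sequence on `S/I`,
consisting of elements of the irrelevant maximal ideal, whose length equals the Krull
dimension of `S/I`. -/
def IsCMIdeal {K : Type} [Field K] {m : ℕ} (I : Ideal (MvPolynomial (Fin m) K)) : Prop :=
  ∃ rs : List (MvPolynomial (Fin m) K),
    (∀ f ∈ rs, f ∈ Ideal.span (Set.range (MvPolynomial.X : Fin m → MvPolynomial (Fin m) K))) ∧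
    RingTheory.Sequence.IsRegular (MvPolynomial (Fin m) K ⧸ I)
      (rs.map (Ideal.Quotient.mk I)) ∧
    (rs.length : WithBot (WithTop ℕ)) = ringKrullDim (MvPolynomial (Fin m) K ⧸ I)

/-- `u` is (the exponent vector of) a minimal monomial generator of the monomial ideal `J`:
the monomial `x^u` lies in `J` but no proper divisor of it does. -/
def IsMinMonGen {K : Type} [Field K] {m : ℕ} (J : Ideal (MvPolynomial (Fin m) K))
    (u : Fin m →₀ ℕ) : Prop :=
  MvPolynomial.monomial u (1 : K) ∈ J ∧
    ∀ v, v ≤ u → v ≠ u → MvPolynomial.monomial v (1 : K) ∉ J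

/-- The dual sequence `a'` of `a`: `a'_i = a_n - a_i` for `i < n` and `a'_n = a_n`. -/
def dualSeq {m : ℕ} (a : Fin (m + 1) → ℕ) : Fin (m + 1) → ℕ :=
  fun i => if i = Fin.last m then a (Fin.last m) else a (Fin.last m) - a i

/-- The involution `σ(w₁,…,w_n) = (w₁,…,w_{n-1}, -(w₁+⋯+w_n))` of `ℤⁿ`. -/
def sigmaMap (m : ℕ) (w : Fin (m + 1) → ℤ) : Fin (m + 1) → ℤ :=
  fun i => if i = Fin.last m then -(∑ j, w j) else w i

/-- The lattice `L(a) = {w ∈ ℤⁿ : ⟨w, a⟩ = 0}` as a set. -/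
def latticeL {m : ℕ} (a : Fin m → ℕ) : Set (Fin m → ℤ) :=
  {w | ∑ i, w i * (a i : ℤ) = 0}

/-- The binomial `f_w = x^{w⁺} - x^{w⁻}` attached to an integer vector `w`. -/
noncomputable def binom (K : Type) [Field K] {m : ℕ} (w : Fin m → ℤ) :
    MvPolynomial (Fin m) K :=
  MvPolynomial.monomial (Finsupp.equivFunOnFinite.symm fun i => (w i).toNat) (1 : K) -
    MvPolynomial.monomial (Finsupp.equivFunOnFinite.symm fun i => (-w i).toNat) (1 : K)

/-- The numerical semigroup (additive submonoid of `ℕ`) generated by the `a_i`. -/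
def semiH {m : ℕ} (a : Fin m → ℕ) : AddSubmonoid ℕ := AddSubmonoid.closure (Set.range a)

/-- The Apéry set `Ap(H, c) = {x ∈ H : x - c ∉ H}`. -/
def apSet {m : ℕ} (a : Fin m → ℕ) (c : ℕ) : Set ℕ :=
  {x | x ∈ semiH a ∧ ¬ ∃ y ∈ semiH a, x = y + c}

/-- The `a`-degree of a monomial: `deg_a(x^u) = ∑ uᵢ aᵢ`. -/
def degA {m : ℕ} (a : Fin m → ℕ) (u : Fin m →₀ ℕ) : ℕ := ∑ i, u i * a i

/-- `u` is the smallest monomial (w.r.t. `lt`) whose `a`-degree equals `h`. -/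
def IsMinMonOfDeg {m : ℕ} (a : Fin m → ℕ) (lt : (Fin m →₀ ℕ) → (Fin m →₀ ℕ) → Prop)
    (h : ℕ) (u : Fin m →₀ ℕ) : Prop :=
  degA a u = h ∧ ∀ v, degA a v = h → v ≠ u → lt u v

/-- The minimal number of generators of an ideal. -/
noncomputable def muI {R : Type} [CommRing R] (I : Ideal R) : ℕ :=
  sInf {k | ∃ s : Finset R, s.card = k ∧ Ideal.span (s : Set R) = I}

/-- `lt` is a monomial order on the monomials of `K[x_1,…,x_m]`: a linear (strict) order
compatible with multiplication and having `1` as smallest monomial. -/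
structure IsMonOrder {m : ℕ} (lt : (Fin m →₀ ℕ) → (Fin m →₀ ℕ) → Prop) : Prop where
  irrefl : ∀ u, ¬ lt u u
  trans : ∀ u v w, lt u v → lt v w → lt u w
  total : ∀ u v, u ≠ v → lt u v ∨ lt v u
  add_right : ∀ u v w, lt u v → lt (u + w) (v + w)
  zero_lt : ∀ u, u ≠ 0 → lt 0 u

lemma revlex_asymm {m : ℕ} (σ : Equiv.Perm (Fin m)) (u v : Fin m →₀ ℕ)
    (h1 : RevLexLt σ u v) (h2 : RevLexLt σ v u) : False := by
  rcases h1 with h1 | ⟨hd1, i, hi, hfi⟩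
  · rcases h2 with h2 | ⟨hd2, _⟩ <;> omega
  · rcases h2 with h2 | ⟨hd2, i', hi', hfi'⟩
    · omega
    · rcases lt_trichotomy (σ i) (σ i') with hc | hc | hc
      · have := hfi i' hc; omega
      · have : i = i' := σ.injective hc
        subst this; omega
      · have := hfi' i hc; omega

lemma revlex_add_right {m : ℕ} (σ : Equiv.Perm (Fin m)) (u v w : Fin m →₀ ℕ)
    (h : RevLexLt σ u v) : RevLexLt σ (u + w) (v + w) := by
  have hds : ∀ x y : Fin m →₀ ℕ, degSum (x + y) = degSum x + degSum y := by
    intro x y; simp [degSum, Finsupp.add_apply, Finset.sum_add_distrib]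
  rcases h with h | ⟨hd, i, hi, hf⟩
  · left; rw [hds, hds]; omega
  · right
    refine ⟨by rw [hds, hds, hd], i, ?_, fun j hj => ?_⟩
    · simp only [Finsupp.add_apply]; omega
    · have := hf j hj
      simp only [Finsupp.add_apply, this]

lemma coeff_aeval_pow {K : Type} [Field K] {m : ℕ} (a : Fin m → ℕ)
    (p : MvPolynomial (Fin m) K) (k : ℕ) :
    (MvPolynomial.aeval (fun i => (Polynomial.X : Polynomial K) ^ a i) p).coeff k
      = ∑ v ∈ p.support.filter (fun v => degA a v = k), MvPolynomial.coeff v p := by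
  rw [MvPolynomial.aeval_def, MvPolynomial.eval₂_eq, Polynomial.finset_sum_coeff,
    Finset.sum_filter]
  refine Finset.sum_congr rfl fun d _ => ?_
  have hx : (∏ i ∈ d.support, ((Polynomial.X : Polynomial K) ^ a i) ^ d i)
      = (Polynomial.X : Polynomial K) ^ degA a d := by
    rw [Finset.prod_subset (Finset.subset_univ d.support)
      (fun i _ hi => by simp [Finsupp.notMem_support_iff.mp hi])]
    rw [degA, ← Finset.prod_pow_eq_pow_sum]
    refine Finset.prod_congr rfl fun i _ => ?_
    rw [← pow_mul, mul_comm]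
  rw [hx]
  simp only [Polynomial.coeff_C_mul, Polynomial.coeff_X_pow, Polynomial.algebraMap_eq,
    mul_ite, mul_one, mul_zero]
  by_cases hdk : degA a d = k <;> simp [hdk]
  exact fun hk => absurd hk.symm hdk

lemma degA_mem_semiH {m : ℕ} (a : Fin m → ℕ) (v : Fin m →₀ ℕ) : degA a v ∈ semiH a := by
  apply AddSubmonoid.sum_mem
  intro i _
  have ha : a i ∈ semiH a := AddSubmonoid.subset_closure ⟨i, rfl⟩
  have := nsmul_mem ha (v i)
  simpa [smul_eq_mul] using this

/-- For every `h` in the Apéry set `Ap(H, a_n)`, the smallest monomial `φ_a(h)` of `a`-degree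
`h` does not belong to `ini_<((x_n) + I(a))`. -/
theorem stmt10 {K : Type} [Field K] {n : ℕ}
    (a : Fin (n + 1) → ℕ) (ha_inj : Function.Injective a) (ha_pos : ∀ i, 0 < a i)
    (ha_gcd : Finset.univ.gcd a = 1)
    (ha_lt : ∀ i, i ≠ Fin.last n → a i < a (Fin.last n))
    (σ : Equiv.Perm (Fin (n + 1))) (hσ : σ (Fin.last n) = Fin.last n) :
    ∀ h ∈ apSet a (a (Fin.last n)), ∀ u : Fin (n + 1) →₀ ℕ,
      IsMinMonOfDeg a (RevLexLt σ) h u →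
      MvPolynomial.monomial u (1 : K) ∉
        iniIdeal (RevLexLt σ)
          (Ideal.span {(MvPolynomial.X (Fin.last n) : MvPolynomial (Fin (n + 1)) K)} ⊔
            toricIdeal K a) := by
  intro h hh u hu hmem
  set J : Ideal (MvPolynomial (Fin (n + 1)) K) :=
    Ideal.span {(MvPolynomial.X (Fin.last n) : MvPolynomial (Fin (n + 1)) K)} ⊔
      toricIdeal K a with hJ
  -- Step B: get f ∈ J with lead monomial w ≤ u
  rw [iniIdeal, Ideal.span, Submodule.mem_span_set] at hmem
  obtain ⟨c, hsup, hsum⟩ := hmem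
  have h1 : MvPolynomial.coeff u (c.sum fun mi r => r • mi) = 1 := by
    rw [hsum]; simp [MvPolynomial.coeff_monomial]
  rw [Finsupp.sum] at h1
  have hne : ∃ p ∈ c.support, MvPolynomial.coeff u (c p • p) ≠ 0 := by
    by_contra hcon
    push_neg at hcon
    rw [MvPolynomial.coeff_sum] at h1
    rw [Finset.sum_eq_zero hcon] at h1
    exact one_ne_zero h1.symm
  obtain ⟨p, hp, hpne⟩ := hne
  obtain ⟨f, hfJ, w, hflead, hpw⟩ := hsup hp
  subst hpw
  have hwu : w ≤ u := by
    rw [smul_eq_mul, MvPolynomial.coeff_mul_monomial'] at hpne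
    by_contra hcon
    simp [hcon] at hpne
  -- Step C: g = f * x^{u-w} ∈ J has lead monomial u
  set g : MvPolynomial (Fin (n + 1)) K := f * MvPolynomial.monomial (u - w) (1 : K) with hg
  have hgJ : g ∈ J := Ideal.mul_mem_right _ _ hfJ
  have hcoeffg : ∀ v, MvPolynomial.coeff v g
      = if u - w ≤ v then MvPolynomial.coeff (v - (u - w)) f else 0 := by
    intro v
    rw [hg, MvPolynomial.coeff_mul_monomial']
    by_cases hc : u - w ≤ v <;> simp [hc]
  have hgu : MvPolynomial.coeff u g ≠ 0 := by
    rw [hcoeffg]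
    have h2 : u - w ≤ u := tsub_le_self
    rw [if_pos h2, tsub_tsub_cancel_of_le hwu]
    exact hflead.1
  have hglead : ∀ v, MvPolynomial.coeff v g ≠ 0 → v ≠ u → RevLexLt σ v u := by
    intro v hv hvu
    rw [hcoeffg] at hv
    by_cases hc : u - w ≤ v
    · rw [if_pos hc] at hv
      have hv' : v - (u - w) ≠ w := by
        intro hcon
        apply hvu
        have := tsub_add_cancel_of_le hc
        rw [hcon] at this
        rw [← this, add_tsub_cancel_of_le hwu]
      have hlt := hflead.2 _ hv hv'
      have := revlex_add_right σ _ _ (u - w) hlt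
      rwa [tsub_add_cancel_of_le hc, add_tsub_cancel_of_le hwu] at this
    · rw [if_neg hc] at hv; exact absurd rfl hv
  -- Step D: decompose g
  rw [hJ] at hgJ
  obtain ⟨s, hs, r, hr, hsr⟩ := Submodule.mem_sup.mp hgJ
  obtain ⟨q, hq⟩ := Ideal.mem_span_singleton'.mp hs
  -- Step E: apply the evaluation map
  set φ : MvPolynomial (Fin (n + 1)) K →ₐ[K] Polynomial K := MvPolynomial.aeval (fun i => (Polynomial.X : Polynomial K) ^ a i) with hφ
  have hr0 : φ r = 0 := hr
  have hφg : φ g = φ q * (Polynomial.X : Polynomial K) ^ a (Fin.last n) := by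
    rw [← hsr, map_add, hr0, add_zero, ← hq, map_mul]
    simp [hφ]
  -- coefficient of φ g at h is coeff u g ≠ 0
  have hfilter : g.support.filter (fun v => degA a v = h) = {u} := by
    ext v
    simp only [Finset.mem_filter, MvPolynomial.mem_support_iff, Finset.mem_singleton]
    constructor
    · rintro ⟨hv, hdv⟩
      by_contra hvu
      exact revlex_asymm σ v u (hglead v hv hvu) (hu.2 v hdv hvu)
    · rintro rfl
      exact ⟨hgu, hu.1⟩
  have hcoeffφg : (φ g).coeff h ≠ 0 := by
    rw [hφ, coeff_aeval_pow, hfilter, Finset.sum_singleton]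
    exact hgu
  rw [hφg, Polynomial.coeff_mul_X_pow'] at hcoeffφg
  by_cases hle : a (Fin.last n) ≤ h
  · rw [if_pos hle] at hcoeffφg
    rw [hφ, coeff_aeval_pow] at hcoeffφg
    have hnemp : (q.support.filter (fun v => degA a v = h - a (Fin.last n))).Nonempty := by
      by_contra hcon
      rw [Finset.not_nonempty_iff_eq_empty] at hcon
      rw [hcon, Finset.sum_empty] at hcoeffφg
      exact hcoeffφg rfl
    obtain ⟨v, hv⟩ := hnemp
    rw [Finset.mem_filter] at hv
    exact hh.2 ⟨degA a v, degA_mem_semiH a v, by omega⟩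
  · rw [if_neg hle] at hcoeffφg
    exact hcoeffφg rfl
end

section
/- Let n ≥ 2, S = K[x_1,…,x_n], m = (x_1,…,x_n), and let I ⊂ S be a graded ideal with m^k ⊆ I. Let < be any monomial order on S. Then μ(I) ≤ μ(ini_<(I)) ≤ μ(m^k) = C(n+k−1, n−1), and moreover μ(I) = C(n+k−1, n−1) if and only if I = m^k. -/
open MvPolynomial

section Basic
variable {n : ℕ}

lemma degSum_add (u v : Fin n →₀ ℕ) : degSum (u + v) = degSum u + degSum v := by
  simp [degSum, Finset.sum_add_distrib]

lemma degSum_single (i : Fin n) (c : ℕ) : degSum (Finsupp.single i c) = c := by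
  simp [degSum, Finsupp.single_apply]

lemma degSum_mono {u v : Fin n →₀ ℕ} (h : u ≤ v) : degSum u ≤ degSum v :=
  Finset.sum_le_sum fun i _ => Finsupp.le_def.mp h i

lemma degSum_strict_mono {u v : Fin n →₀ ℕ} (h : u ≤ v) (hne : u ≠ v) :
    degSum u < degSum v := by
  obtain ⟨i, hi⟩ : ∃ i, u i ≠ v i := by
    by_contra hc; push_neg at hc; exact hne (Finsupp.ext hc)
  exact Finset.sum_lt_sum (fun i _ => Finsupp.le_def.mp h i)
    ⟨i, Finset.mem_univ i, lt_of_le_of_ne (Finsupp.le_def.mp h i) hi⟩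

lemma degSum_eq_zero {u : Fin n →₀ ℕ} (h : degSum u = 0) : u = 0 := by
  have := Finset.sum_eq_zero_iff.mp h
  exact Finsupp.ext fun i => this i (Finset.mem_univ i)


lemma exists_le_degSum {j : ℕ} : ∀ d (u : Fin n →₀ ℕ), degSum u = d → j ≤ d →
    ∃ w, w ≤ u ∧ degSum w = j := by
  intro d
  induction d with
  | zero => exact fun u hd hj => ⟨u, le_refl u, by omega⟩
  | succ d ih =>
    intro u hd hj
    rcases eq_or_lt_of_le hj with h | h
    · exact ⟨u, le_refl u, by omega⟩
    · have hu0 : u ≠ 0 := by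
        intro h0; rw [h0] at hd; simp [degSum] at hd
      obtain ⟨i, hi⟩ := Finsupp.ne_iff.mp hu0
      simp only [Finsupp.coe_zero, Pi.zero_apply] at hi
      have hle : Finsupp.single i 1 ≤ u := Finsupp.single_le_iff.mpr (by omega)
      have hcan : u - Finsupp.single i 1 + Finsupp.single i 1 = u := tsub_add_cancel_of_le hle
      have hdw : degSum (u - Finsupp.single i 1) = d := by
        have := degSum_add (u - Finsupp.single i 1) (Finsupp.single i 1)
        rw [hcan, degSum_single] at this
        omega
      obtain ⟨w, hw1, hw2⟩ := ih (u - Finsupp.single i 1) hdw (by omega)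
      exact ⟨w, le_trans hw1 tsub_le_self, hw2⟩

section MonOrder
variable {lt : (Fin n →₀ ℕ) → (Fin n →₀ ℕ) → Prop} (hlt : IsMonOrder lt)

lemma IsMonOrder.le_cases (hlt : IsMonOrder lt) {u v : Fin n →₀ ℕ} (h : u ≤ v) :
    u = v ∨ lt u v := by
  rcases eq_or_ne u v with he | he
  · exact Or.inl he
  · right
    have hcan : u + (v - u) = v := by rw [add_comm]; exact tsub_add_cancel_of_le h
    have hne : v - u ≠ 0 := by
      intro h0; apply he; rw [← hcan, h0, add_zero]
    have := hlt.add_right 0 (v - u) u (hlt.zero_lt _ hne)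
    rwa [zero_add, add_comm, hcan] at this

lemma IsMonOrder.not_lt_of_le (hlt : IsMonOrder lt) {u v : Fin n →₀ ℕ} (h : u ≤ v) :
    ¬ lt v u := by
  intro hvu
  rcases hlt.le_cases h with he | hl
  · exact hlt.irrefl u (he ▸ hvu)
  · exact hlt.irrefl u (hlt.trans _ _ _ hl hvu)

lemma IsMonOrder.wf (hlt : IsMonOrder lt) : WellFounded lt := by
  haveI : IsIrrefl (Fin n →₀ ℕ) lt := ⟨hlt.irrefl⟩
  haveI : IsTrans (Fin n →₀ ℕ) lt := ⟨hlt.trans⟩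
  haveI : IsStrictOrder (Fin n →₀ ℕ) lt := {}
  rw [RelEmbedding.wellFounded_iff_isEmpty]
  constructor
  intro e
  obtain ⟨i, j, hij, hle⟩ := Set.isPWO_of_wellQuasiOrderedLE (Set.univ : Set (Fin n →₀ ℕ))
    (fun m => ⟨e m, Set.mem_univ _⟩)
  exact hlt.not_lt_of_le (show e i ≤ e j from hle) (e.map_rel_iff.mpr hij)


/-- every finite nonempty set of monomials has a maximum w.r.t. lt -/
lemma IsMonOrder.exists_max (hlt : IsMonOrder lt) (s : Finset (Fin n →₀ ℕ)) (hs : s.Nonempty) :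
    ∃ u ∈ s, ∀ v ∈ s, v ≠ u → lt v u := by
  classical
  induction s using Finset.induction_on with
  | empty => exact absurd hs (by simp)
  | @insert a s ha ih =>
    rcases Finset.eq_empty_or_nonempty s with he | hne
    · subst he
      exact ⟨a, by simp, fun v hv hne => absurd (by simpa using hv) hne⟩
    · obtain ⟨u, hu, hmax⟩ := ih hne
      have hau : a ≠ u := fun h => ha (h ▸ hu)
      rcases hlt.total a u hau with h | h
      · refine ⟨u, by simp [hu], fun v hv hvne => ?_⟩
        rcases Finset.mem_insert.mp hv with rfl | hvs
        · exact h
        · exact hmax v hvs hvne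
      · refine ⟨a, by simp, fun v hv hvne => ?_⟩
        rcases Finset.mem_insert.mp hv with rfl | hvs
        · exact absurd rfl hvne
        · rcases eq_or_ne v u with rfl | hvu
          · exact h
          · exact hlt.trans _ _ _ (hmax v hvs hvu) h

end MonOrder
end Basic

section Lead
variable {K : Type} [Field K] {n : ℕ} {lt : (Fin n →₀ ℕ) → (Fin n →₀ ℕ) → Prop}
  (hlt : IsMonOrder lt)

lemma exists_isLeadMon (hlt : IsMonOrder lt) {f : MvPolynomial (Fin n) K} (hf : f ≠ 0) :
    ∃ u, IsLeadMon lt f u := by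
  obtain ⟨u, hu, hmax⟩ := hlt.exists_max f.support (support_nonempty.mpr hf)
  exact ⟨u, mem_support_iff.mp hu, fun v hv hvne => hmax v (mem_support_iff.mpr hv) hvne⟩

lemma isLeadMon_unique (hlt : IsMonOrder lt) {f : MvPolynomial (Fin n) K} {u v : Fin n →₀ ℕ}
    (hu : IsLeadMon lt f u) (hv : IsLeadMon lt f v) : u = v := by
  by_contra hne
  exact hlt.irrefl u (hlt.trans _ _ _ (hv.2 u hu.1 hne) (hu.2 v hv.1 (Ne.symm hne)))

lemma isLeadMon_monomial (hlt : IsMonOrder lt) {c : K} (hc : c ≠ 0) (u : Fin n →₀ ℕ) :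
    IsLeadMon lt (monomial u c) u := by
  refine ⟨by simp [coeff_monomial, hc], fun v hv hvne => ?_⟩
  rw [coeff_monomial] at hv
  by_cases h : u = v
  · exact absurd h.symm hvne
  · simp [h] at hv

lemma isLeadMon_monomial_mul (hlt : IsMonOrder lt) {c : K} (hc : c ≠ 0)
    {f : MvPolynomial (Fin n) K} {u : Fin n →₀ ℕ} (hf : IsLeadMon lt f u) (w : Fin n →₀ ℕ) :
    IsLeadMon lt (monomial w c * f) (w + u) := by
  constructor
  · rw [coeff_monomial_mul]
    exact mul_ne_zero hc hf.1
  · intro v hv hvne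
    rw [coeff_monomial_mul'] at hv
    by_cases hwv : w ≤ v
    · simp only [if_pos hwv] at hv
      have h2 : coeff (v - w) f ≠ 0 := fun h => hv (by rw [h, mul_zero])
      have hsub : v - w + w = v := tsub_add_cancel_of_le hwv
      have hne2 : v - w ≠ u := by
        intro h; apply hvne; rw [← hsub, h, add_comm]
      have := hlt.add_right _ _ w (hf.2 _ h2 hne2)
      rwa [hsub, add_comm u w] at this
    · simp [if_neg hwv] at hv

end Lead

section MonIdeal
variable {K : Type} [Field K] {n : ℕ}

local notation "mono" => fun u => MvPolynomial.monomial u (1 : K)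

lemma mono_mem_span {U : Set (Fin n →₀ ℕ)} {u : Fin n →₀ ℕ} :
    monomial u (1 : K) ∈ Ideal.span ((fun s => monomial s (1 : K)) '' U) ↔ ∃ t ∈ U, t ≤ u := by
  rw [mem_ideal_span_monomial_image]
  simp [support_monomial]

/-- every monomial of a monomial ideal has a minimal monomial generator below it -/
lemma exists_minMonGen {U : Set (Fin n →₀ ℕ)} {J : Ideal (MvPolynomial (Fin n) K)}
    (hJ : J = Ideal.span ((fun s => monomial s (1 : K)) '' U)) :
    ∀ u : Fin n →₀ ℕ, monomial u (1 : K) ∈ J → ∃ v, v ≤ u ∧ IsMinMonGen J v := by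
  have key : ∀ d (u : Fin n →₀ ℕ), degSum u = d → monomial u (1 : K) ∈ J →
      ∃ v, v ≤ u ∧ IsMinMonGen J v := by
    intro d
    induction d using Nat.strong_induction_on with
    | _ d ih =>
      intro u hd hu
      by_cases hmin : ∀ v, v ≤ u → v ≠ u → monomial v (1 : K) ∉ J
      · exact ⟨u, le_refl u, hu, hmin⟩
      · push_neg at hmin
        obtain ⟨v, hvu, hvne, hv⟩ := hmin
        obtain ⟨w, hwv, hw⟩ := ih (degSum v) (hd ▸ degSum_strict_mono hvu hvne) v rfl hv
        exact ⟨w, le_trans hwv hvu, hw⟩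
  exact fun u => key (degSum u) u rfl

/-- a monomial ideal is spanned by its minimal monomial generators -/
lemma span_minMonGen {U : Set (Fin n →₀ ℕ)} {J : Ideal (MvPolynomial (Fin n) K)}
    (hJ : J = Ideal.span ((fun s => monomial s (1 : K)) '' U)) :
    J = Ideal.span ((fun s => monomial s (1 : K)) '' {v | IsMinMonGen J v}) := by
  apply le_antisymm
  · conv_lhs => rw [hJ]
    apply Ideal.span_le.mpr
    rintro p ⟨t, ht, rfl⟩
    show monomial t (1 : K) ∈ _
    have htJ : monomial t (1 : K) ∈ J := hJ ▸ Ideal.subset_span ⟨t, ht, rfl⟩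
    obtain ⟨v, hvt, hv⟩ := exists_minMonGen hJ t htJ
    have : monomial t (1 : K) = monomial (t - v) (1 : K) * monomial v (1 : K) := by
      rw [monomial_mul, one_mul, tsub_add_cancel_of_le hvt]
    rw [this]
    exact Ideal.mul_mem_left _ _ (Ideal.subset_span ⟨v, hv, rfl⟩)
  · apply Ideal.span_le.mpr
    rintro p ⟨v, hv, rfl⟩
    exact hv.1

variable {J : Ideal (MvPolynomial (Fin n) K)} {k : ℕ}

/-- if all degree-k monomials lie in J, min gens have degree ≤ k -/
lemma minMonGen_degSum_le (hmk : ∀ u : Fin n →₀ ℕ, degSum u = k → monomial u (1 : K) ∈ J)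
    {v : Fin n →₀ ℕ} (hv : IsMinMonGen J v) : degSum v ≤ k := by
  by_contra h
  push_neg at h
  obtain ⟨w, hwv, hwk⟩ := exists_le_degSum (j := k) (degSum v) v rfl (le_of_lt h)
  have hne : w ≠ v := fun he => by rw [he] at hwk; omega
  exact hv.2 w hwv hne (hmk w hwk)


/-- the stars-and-bars injection of min gens into degree-k monomials -/
lemma minMonGen_inj (i₁ : Fin n)
    (hmk : ∀ u : Fin n →₀ ℕ, degSum u = k → monomial u (1 : K) ∈ J) :
    ∀ u v : Fin n →₀ ℕ, IsMinMonGen J u → IsMinMonGen J v →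
      u + Finsupp.single i₁ (k - degSum u) = v + Finsupp.single i₁ (k - degSum v) → u = v := by
  have aux : ∀ u v : Fin n →₀ ℕ, IsMinMonGen J u → IsMinMonGen J v →
      u + Finsupp.single i₁ (k - degSum u) = v + Finsupp.single i₁ (k - degSum v) →
      degSum u ≤ degSum v → u = v := by
    intro u v hu hv heq hduv
    have hdu := minMonGen_degSum_le hmk hu
    have hdv := minMonGen_degSum_le hmk hv
    have happ : ∀ j, u j + Finsupp.single i₁ (k - degSum u) j
        = v j + Finsupp.single i₁ (k - degSum v) j := by
      intro j; rw [← Finsupp.add_apply, ← Finsupp.add_apply, heq]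
    have hle : u ≤ v := by
      rw [Finsupp.le_def]
      intro j
      have := happ j
      rcases eq_or_ne j i₁ with rfl | hj
      · simp only [Finsupp.single_eq_same] at this; omega
      · simp only [Finsupp.single_eq_of_ne' (Ne.symm hj)] at this; omega
    by_contra hne
    exact hv.2 u hle hne hu.1
  intro u v hu hv heq
  rcases le_total (degSum u) (degSum v) with h | h
  · exact aux u v hu hv heq h
  · exact (aux v u hv hu heq.symm h).symm


end MonIdeal

/-- The finset of monomials of degree `k`. -/
noncomputable def BkF (n k : ℕ) : Finset (Fin n →₀ ℕ) :=
  (Finset.Nat.antidiagonalTuple n k).map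
    ⟨Finsupp.equivFunOnFinite.symm, Finsupp.equivFunOnFinite.symm.injective⟩

lemma mem_BkF {n k : ℕ} {u : Fin n →₀ ℕ} : u ∈ BkF n k ↔ degSum u = k := by
  simp only [BkF, Finset.mem_map, Function.Embedding.coeFn_mk,
    Finset.Nat.mem_antidiagonalTuple]
  constructor
  · rintro ⟨x, hx, rfl⟩
    simpa [degSum] using hx
  · intro h
    exact ⟨u, by simpa [degSum] using h, by simp⟩


lemma degSum_eq_card {n : ℕ} (u : Fin n →₀ ℕ) :
    degSum u = Multiset.card (Finsupp.toMultiset u) := by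
  rw [Finsupp.card_toMultiset, Finsupp.sum_fintype _ _ (fun _ => rfl)]
  rfl

lemma card_BkF {n k : ℕ} (hn : 1 ≤ n) : (BkF n k).card = (n + k - 1).choose (n - 1) := by
  classical
  have h1 : (BkF n k).card = Fintype.card {x // x ∈ BkF n k} := (Fintype.card_coe _).symm
  have h2 : Fintype.card {x // x ∈ BkF n k} = Fintype.card (Sym (Fin n) k) := by
    apply Fintype.card_congr
    refine ⟨fun u => ⟨Finsupp.toMultiset u.1, by rw [← degSum_eq_card]; exact mem_BkF.mp u.2⟩,
      fun s => ⟨Multiset.toFinsupp s.1, mem_BkF.mpr (by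
        rw [degSum_eq_card, Multiset.toFinsupp_toMultiset]; exact s.2)⟩,
      fun u => Subtype.ext (by simp [Finsupp.toMultiset_toFinsupp]),
      fun s => Subtype.ext (by simp [Multiset.toFinsupp_toMultiset])⟩
  rw [h1, h2, Sym.card_sym_eq_multichoose, Fintype.card_fin, Nat.multichoose_eq]
  have h3 : n + k - 1 - k = n - 1 := by omega
  rw [← h3, Nat.choose_symm (by omega)]

section MinCard
variable {K : Type} [Field K] {n : ℕ} {J : Ideal (MvPolynomial (Fin n) K)} {k : ℕ}

lemma minMonGen_subset (i₁ : Fin n)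
    (hmk : ∀ u : Fin n →₀ ℕ, degSum u = k → monomial u (1 : K) ∈ J) :
    ∀ v ∈ {v | IsMinMonGen J v},
      v + Finsupp.single i₁ (k - degSum v) ∈ (↑(BkF n k) : Set (Fin n →₀ ℕ)) := by
  intro v hv
  simp only [Finset.coe_sort_coe, Finset.mem_coe, mem_BkF, degSum_add, degSum_single]
  have := minMonGen_degSum_le hmk hv
  omega

lemma minMonGen_finite (i₁ : Fin n)
    (hmk : ∀ u : Fin n →₀ ℕ, degSum u = k → monomial u (1 : K) ∈ J) :
    {v | IsMinMonGen J v}.Finite := by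
  apply Set.Finite.of_finite_image (f := fun v => v + Finsupp.single i₁ (k - degSum v))
  · exact (BkF n k).finite_toSet.subset (Set.image_subset_iff.mpr (minMonGen_subset i₁ hmk))
  · exact fun u hu v hv => minMonGen_inj i₁ hmk u v hu hv

lemma minMonGen_card_le (i₁ : Fin n)
    (hmk : ∀ u : Fin n →₀ ℕ, degSum u = k → monomial u (1 : K) ∈ J) :
    {v | IsMinMonGen J v}.ncard ≤ (BkF n k).card := by
  rw [← Set.ncard_coe_finset]
  exact Set.ncard_le_ncard_of_injOn _ (minMonGen_subset i₁ hmk)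
    (fun u hu v hv => minMonGen_inj i₁ hmk u v hu hv) (BkF n k).finite_toSet

/-- strict bound when some min gen has degree < k (needs two variables) -/
lemma minMonGen_card_lt (hn : 2 ≤ n)
    (hmk : ∀ u : Fin n →₀ ℕ, degSum u = k → monomial u (1 : K) ∈ J)
    (hex : ∃ v, IsMinMonGen J v ∧ degSum v < k) :
    {v | IsMinMonGen J v}.ncard < (BkF n k).card := by
  classical
  set i₀ : Fin n := ⟨0, by omega⟩
  set i₁ : Fin n := ⟨1, by omega⟩
  have hi : i₀ ≠ i₁ := by simp [i₀, i₁, Fin.ext_iff]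
  -- choose a min gen of degree < k with maximal i₀-coordinate
  have hfinD : {v | IsMinMonGen J v ∧ degSum v < k}.Finite :=
    (minMonGen_finite i₁ hmk).subset (fun v hv => hv.1)
  obtain ⟨u, hu, hmax⟩ := Set.exists_max_image _ (fun v => v i₀) hfinD
    ⟨hex.choose, hex.choose_spec⟩
  have hudeg : degSum u < k := hu.2
  -- the missed target
  set w : Fin n →₀ ℕ := u + Finsupp.single i₀ (k - degSum u) with hw
  have hwdeg : degSum w = k := by
    simp only [hw, degSum_add, degSum_single]
    have := minMonGen_degSum_le hmk hu.1
    omega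
  have hwmem : w ∈ BkF n k := mem_BkF.mpr hwdeg
  have hmiss : ∀ v ∈ {v | IsMinMonGen J v},
      v + Finsupp.single i₁ (k - degSum v) ≠ w := by
    intro v hv heq
    have hdv := minMonGen_degSum_le hmk hv
    have happ : ∀ j, v j + Finsupp.single i₁ (k - degSum v) j = w j := by
      intro j; rw [← Finsupp.add_apply, heq]
    rcases eq_or_lt_of_le hdv with hdvk | hdvk
    · -- then v = w, but u ≤ w, u ≠ w, mono u ∈ J contradicts minimality of v
      have hvw : v = w := by
        rw [← heq, hdvk]; simp
      have huw : u ≤ w := by rw [hw]; exact le_add_right (le_refl u)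
      have hunw : u ≠ w := by
        intro he
        have : degSum u = k := by rw [he, hwdeg]
        omega
      exact hv.2 u (hvw ▸ huw) (fun h5 => hunw (h5.symm ▸ hvw.symm ▸ rfl)) hu.1.1
    · -- then v is a min gen of degree < k with bigger i₀-coordinate
      have hvi₀ : v i₀ = u i₀ + (k - degSum u) := by
        have := happ i₀
        rw [Finsupp.single_eq_of_ne' (Ne.symm hi)] at this
        simpa [hw, Finsupp.add_apply, Finsupp.single_eq_same] using this
      have hgt : u i₀ < v i₀ := by
        have := hu.2; omega
      exact absurd (hmax v ⟨hv, hdvk⟩) (by omega)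
  -- injection into BkF \ {w}
  have : {v | IsMinMonGen J v}.ncard ≤ ((BkF n k).erase w).card := by
    rw [← Set.ncard_coe_finset]
    refine Set.ncard_le_ncard_of_injOn (fun v => v + Finsupp.single i₁ (k - degSum v))
      (fun v hv => ?_) (fun a ha b hb => minMonGen_inj i₁ hmk a b ha hb)
      ((BkF n k).erase w).finite_toSet
    simp only [Finset.coe_erase, Set.mem_diff, Set.mem_singleton_iff]
    exact ⟨minMonGen_subset i₁ hmk v hv, hmiss v hv⟩
  have hcard : ((BkF n k).erase w).card < (BkF n k).card :=
    Finset.card_erase_lt_of_mem hwmem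
  omega

end MinCard

section Lower
variable {K : Type} [Field K] {n : ℕ} {J : Ideal (MvPolynomial (Fin n) K)}
  {U : Set (Fin n →₀ ℕ)}

lemma coeff_mul_minMonGen (hJU : J = Ideal.span ((fun s => monomial s (1 : K)) '' U))
    {f : MvPolynomial (Fin n) K} (hf : f ∈ J) {u : Fin n →₀ ℕ} (hu : IsMinMonGen J u)
    (c : MvPolynomial (Fin n) K) :
    coeff u (c * f) = coeff 0 c * coeff u f := by
  classical
  rw [coeff_mul]
  apply Finset.sum_eq_single (0, u)
  · rintro ⟨b1, b2⟩ hb hne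
    rw [Finset.HasAntidiagonal.mem_antidiagonal] at hb
    by_cases hb2 : coeff b2 f = 0
    · simp [hb2]
    · exfalso
      have hb2u : b2 ≤ u := hb ▸ (le_add_self : b2 ≤ b1 + b2)
      have hb2ne : b2 ≠ u := by
        rintro rfl
        apply hne
        have hb10 : b1 = 0 := add_eq_right.mp hb
        rw [hb10]
      have hsupp : b2 ∈ f.support := mem_support_iff.mpr hb2
      obtain ⟨t, ht, htb⟩ := mem_ideal_span_monomial_image.mp (hJU ▸ hf) b2 hsupp
      exact hu.2 b2 hb2u hb2ne (hJU ▸ mono_mem_span.mpr ⟨t, ht, htb⟩)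
  · intro h
    exact absurd (Finset.HasAntidiagonal.mem_antidiagonal.mpr (zero_add u)) h

/-- lower bound: any generating set of a monomial ideal has at least as many elements
as there are minimal monomial generators -/
lemma minMonGen_card_le_span (hJU : J = Ideal.span ((fun s => monomial s (1 : K)) '' U))
    (hfin : {v | IsMinMonGen J v}.Finite) (s : Finset (MvPolynomial (Fin n) K))
    (hs : Ideal.span (s : Set (MvPolynomial (Fin n) K)) = J) :
    {v | IsMinMonGen J v}.ncard ≤ s.card := by
  classical
  set F := hfin.toFinset with hF
  set θ : MvPolynomial (Fin n) K → ({x // x ∈ F} → K) :=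
    fun f => fun u => coeff (u : Fin n →₀ ℕ) f with hθ
  have claim1 : ∀ f, f ∈ J → θ f ∈ Submodule.span K (θ '' (s : Set (MvPolynomial (Fin n) K))) := by
    intro f hf
    have hf' : f ∈ Ideal.span (s : Set (MvPolynomial (Fin n) K)) := by rw [hs]; exact hf
    clear hf
    induction hf' using Submodule.span_induction with
    | mem x h => exact Submodule.subset_span ⟨x, h, rfl⟩
    | zero =>
      have : θ 0 = 0 := by funext u; simp [hθ]
      rw [this]; exact Submodule.zero_mem _
    | add x y hx hy ihx ihy =>
      have : θ (x + y) = θ x + θ y := by funext u; simp [hθ, coeff_add]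
      rw [this]; exact Submodule.add_mem _ ihx ihy
    | smul a x hx ih =>
      have hxJ : x ∈ J := hs ▸ hx
      have : θ (a • x) = coeff 0 a • θ x := by
        funext u
        have humem : IsMinMonGen J (u : Fin n →₀ ℕ) :=
          (Set.Finite.mem_toFinset hfin).mp u.2
        simp only [hθ, smul_eq_mul, Pi.smul_apply, smul_eq_mul]
        exact coeff_mul_minMonGen hJU hxJ humem a
      rw [this]; exact Submodule.smul_mem _ _ ih
  have claim2 : Submodule.span K (θ '' (s : Set (MvPolynomial (Fin n) K))) = ⊤ := by
    rw [eq_top_iff, ← (Pi.basisFun K {x // x ∈ F}).span_eq]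
    apply Submodule.span_le.mpr
    rintro - ⟨u₀, rfl⟩
    have hmem : IsMinMonGen J (u₀ : Fin n →₀ ℕ) :=
      (Set.Finite.mem_toFinset hfin).mp u₀.2
    have : Pi.basisFun K {x // x ∈ F} u₀ = θ (monomial (u₀ : Fin n →₀ ℕ) (1 : K)) := by
      funext u
      simp only [Pi.basisFun_apply, hθ, coeff_monomial]
      rcases eq_or_ne u u₀ with rfl | h
      · simp
      · rw [Pi.single_eq_of_ne h, if_neg (fun hc => h (Subtype.ext hc).symm)]
    rw [this]
    exact claim1 _ hmem.1
  have hrank : F.card ≤ (s.image θ).card := by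
    have h1 : Module.finrank K ({x // x ∈ F} → K) = F.card := by
      rw [Module.finrank_fintype_fun_eq_card, Fintype.card_coe]
    have h2 : Submodule.span K ((s.image θ : Finset _) : Set ({x // x ∈ F} → K)) = ⊤ := by
      rw [Finset.coe_image]; exact claim2
    have h3 : Module.finrank K (Submodule.span K ((s.image θ : Finset _) : Set ({x // x ∈ F} → K)))
        ≤ (s.image θ).card := finrank_span_finset_le_card _
    rw [h2, finrank_top] at h3
    omega
  calc {v | IsMinMonGen J v}.ncard = F.card := Set.ncard_eq_toFinset_card _ hfin
    _ ≤ (s.image θ).card := hrank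
    _ ≤ s.card := Finset.card_image_le

end Lower

section Division
variable {K : Type} [Field K] {n : ℕ} {lt : (Fin n →₀ ℕ) → (Fin n →₀ ℕ) → Prop}

/-- Macaulay / division: a subset of I whose lead monomials dominate all lead monomials
of I generates I. -/
lemma span_eq_of_leadMon_dominates (hlt : IsMonOrder lt) {I : Ideal (MvPolynomial (Fin n) K)}
    {G : Set (MvPolynomial (Fin n) K)} (hGI : G ⊆ (I : Set (MvPolynomial (Fin n) K)))
    (hdom : ∀ f ∈ I, f ≠ 0 → ∀ u, IsLeadMon lt f u →
      ∃ g ∈ G, ∃ v, IsLeadMon lt g v ∧ v ≤ u) :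
    Ideal.span G = I := by
  apply le_antisymm (Ideal.span_le.mpr hGI)
  intro f hf
  rcases eq_or_ne f 0 with rfl | hf0
  · exact Ideal.zero_mem _
  obtain ⟨u, hu⟩ := exists_isLeadMon hlt hf0
  -- strong induction on the lead monomial
  revert f hf0 hu hf
  induction u using WellFounded.induction hlt.wf with
  | _ u ih =>
    intro f hf hf0 hu
    obtain ⟨g, hgG, v, hv, hvu⟩ := hdom f hf hf0 u hu
    have hb : coeff v g ≠ 0 := hv.1
    have hc : coeff u f ≠ 0 := hu.1
    set q : MvPolynomial (Fin n) K := monomial (u - v) (coeff u f / coeff v g) with hq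
    set f' : MvPolynomial (Fin n) K := f - q * g with hf'
    have hqg : IsLeadMon lt (q * g) u := by
      have := isLeadMon_monomial_mul hlt (div_ne_zero hc hb) hv (u - v)
      rwa [tsub_add_cancel_of_le hvu] at this
    have hcoeffu : coeff u (q * g) = coeff u f := by
      rw [hq, coeff_monomial_mul', if_pos tsub_le_self, tsub_tsub_cancel_of_le hvu,
        div_mul_cancel₀ _ hb]
    have hqgspan : q * g ∈ Ideal.span G :=
      Ideal.mul_mem_left _ _ (Ideal.subset_span hgG)
    have hf'I : f' ∈ I := I.sub_mem hf (Ideal.mul_mem_left _ _ (hGI hgG))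
    have hsplit : f = f' + q * g := by rw [hf']; ring
    rcases eq_or_ne f' 0 with hf'0 | hf'0
    · rw [hsplit, hf'0, zero_add]; exact hqgspan
    · obtain ⟨u', hu'⟩ := exists_isLeadMon hlt hf'0
      have hlt' : lt u' u := by
        have hcu' : coeff u' f' ≠ 0 := hu'.1
        have hne : u' ≠ u := by
          intro h
          rw [h, hf'] at hcu'
          rw [coeff_sub, hcoeffu, sub_self] at hcu'
          exact hcu' rfl
        have : coeff u' f ≠ 0 ∨ coeff u' (q * g) ≠ 0 := by
          by_contra hcon
          push_neg at hcon
          rw [hf', coeff_sub, hcon.1, hcon.2, sub_self] at hcu'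
          exact hcu' rfl
        rcases this with h | h
        · exact hu.2 u' h hne
        · exact hqg.2 u' h hne
      have hf'span : f' ∈ Ideal.span G := ih u' hlt' hf'I hf'0 hu'
      rw [hsplit]
      exact Ideal.add_mem _ hf'span hqgspan

end Division

section Power
open Pointwise
variable {K : Type} [Field K] {n : ℕ}

lemma span_mono_mul (A B : Set (Fin n →₀ ℕ)) :
    Ideal.span ((fun s => monomial s (1 : K)) '' A) *
      Ideal.span ((fun s => monomial s (1 : K)) '' B) =
      Ideal.span ((fun s => monomial s (1 : K)) '' (A + B)) := by
  rw [Ideal.span_mul_span']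
  congr 1
  ext p
  constructor
  · rintro ⟨-, ⟨a, ha, rfl⟩, -, ⟨b, hb, rfl⟩, rfl⟩
    exact ⟨a + b, Set.add_mem_add ha hb, by
      show (monomial (a+b)) (1:K) = monomial a 1 * monomial b 1
      rw [monomial_mul, one_mul]⟩
  · rintro ⟨c, hc, rfl⟩
    obtain ⟨a, ha, b, hb, rfl⟩ := hc
    exact ⟨monomial a 1, ⟨a, ha, rfl⟩, monomial b 1, ⟨b, hb, rfl⟩, by
      show monomial a (1:K) * monomial b 1 = monomial (a+b) 1
      rw [monomial_mul, one_mul]⟩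

lemma degSet_add (j k : ℕ) :
    ({u : Fin n →₀ ℕ | degSum u = j} + {u | degSum u = k}) = {u | degSum u = j + k} := by
  ext u
  constructor
  · rintro ⟨a, ha, b, hb, rfl⟩
    simp only [Set.mem_setOf_eq] at *
    rw [degSum_add, ha, hb]
  · intro hu
    simp only [Set.mem_setOf_eq] at hu
    obtain ⟨w, hwu, hwj⟩ := exists_le_degSum (j := j) (degSum u) u rfl (by omega)
    refine ⟨w, hwj, u - w, ?_, ?_⟩
    · show degSum (u - w) = k
      have h := degSum_add w (u - w)
      rw [add_comm w, tsub_add_cancel_of_le hwu] at h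
      omega
    · show w + (u - w) = u
      rw [add_comm]; exact tsub_add_cancel_of_le hwu

lemma span_range_X_eq : Ideal.span (Set.range (X : Fin n → MvPolynomial (Fin n) K)) =
    Ideal.span ((fun s => monomial s (1 : K)) '' {u | degSum u = 1}) := by
  congr 1
  ext p
  constructor
  · rintro ⟨i, rfl⟩
    exact ⟨Finsupp.single i 1, by simp [degSum_single], rfl⟩
  · rintro ⟨u, hu, rfl⟩
    simp only [Set.mem_setOf_eq] at hu
    -- u has degree 1: u = single i 1 for some i
    have hu0 : u ≠ 0 := fun h => by rw [h] at hu; simp [degSum] at hu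
    obtain ⟨i, hi⟩ := Finsupp.ne_iff.mp hu0
    simp only [Finsupp.coe_zero, Pi.zero_apply] at hi
    have hle : Finsupp.single i 1 ≤ u := Finsupp.single_le_iff.mpr (by omega)
    have : u = Finsupp.single i 1 := by
      have hd := degSum_strict_mono (v := u) hle
      by_contra hne
      have := hd (Ne.symm hne)
      rw [degSum_single] at this
      omega
    exact ⟨i, by rw [this]; rfl⟩

lemma span_X_pow (k : ℕ) :
    (Ideal.span (Set.range (X : Fin n → MvPolynomial (Fin n) K))) ^ k =
      Ideal.span ((fun s => monomial s (1 : K)) '' {u | degSum u = k}) := by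
  induction k with
  | zero =>
    rw [pow_zero]
    have h0 : {u : Fin n →₀ ℕ | degSum u = 0} = {0} := by
      ext u
      simp only [Set.mem_setOf_eq, Set.mem_singleton_iff]
      exact ⟨degSum_eq_zero, fun h => by rw [h]; simp [degSum]⟩
    rw [h0]
    simp only [Set.image_singleton, monomial_zero', C_1]
    rw [Ideal.span_singleton_one, Ideal.one_eq_top]
  | succ k ih =>
    rw [pow_succ, ih, span_range_X_eq, span_mono_mul, degSet_add]

end Power

section Mu
variable {R : Type} [CommRing R]

lemma muI_le {I : Ideal R} (s : Finset R) (hs : Ideal.span (s : Set R) = I) :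
    muI I ≤ s.card := Nat.sInf_le ⟨s, rfl, hs⟩

lemma muI_witness {I : Ideal R} (h : ∃ s : Finset R, Ideal.span (s : Set R) = I) :
    ∃ s : Finset R, s.card = muI I ∧ Ideal.span (s : Set R) = I := by
  have hne : {k | ∃ s : Finset R, s.card = k ∧ Ideal.span (s : Set R) = I}.Nonempty := by
    obtain ⟨s, hs⟩ := h
    exact ⟨s.card, s, rfl, hs⟩
  exact Nat.sInf_mem hne

end Mu

section Ini
variable {K : Type} [Field K] {n : ℕ} {lt : (Fin n →₀ ℕ) → (Fin n →₀ ℕ) → Prop}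
  {I : Ideal (MvPolynomial (Fin n) K)}

lemma iniIdeal_eq_span :
    iniIdeal lt I = Ideal.span ((fun s => monomial s (1 : K)) ''
      {u | ∃ f ∈ I, IsLeadMon lt f u}) := by
  unfold iniIdeal
  congr 1
  ext p
  constructor
  · rintro ⟨f, hf, u, hu, rfl⟩
    exact ⟨u, ⟨f, hf, hu⟩, rfl⟩
  · rintro ⟨u, ⟨f, hf, hu⟩, rfl⟩
    exact ⟨f, hf, u, hu, rfl⟩

lemma mono_mem_iniIdeal (hlt : IsMonOrder lt) {u : Fin n →₀ ℕ}
    (h : monomial u (1 : K) ∈ I) : monomial u (1 : K) ∈ iniIdeal lt I := by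
  unfold iniIdeal
  exact Ideal.subset_span ⟨monomial u 1, h, u, isLeadMon_monomial hlt one_ne_zero u, rfl⟩

lemma exists_leadMon_of_mono_mem_iniIdeal (hlt : IsMonOrder lt) {u : Fin n →₀ ℕ}
    (h : monomial u (1 : K) ∈ iniIdeal lt I) : ∃ f ∈ I, IsLeadMon lt f u := by
  rw [iniIdeal_eq_span] at h
  obtain ⟨t, ⟨f, hf, hft⟩, htu⟩ := mono_mem_span.mp h
  refine ⟨monomial (u - t) 1 * f, I.mul_mem_left _ hf, ?_⟩
  have := isLeadMon_monomial_mul hlt (one_ne_zero (α := K)) hft (u - t)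
  rwa [tsub_add_cancel_of_le htu] at this

end Ini

section PowMu
variable {K : Type} [Field K] {n : ℕ}

lemma coe_BkF (n k : ℕ) : (↑(BkF n k) : Set (Fin n →₀ ℕ)) = {u | degSum u = k} :=
  Set.ext fun u => by simp [mem_BkF]

lemma isMinMonGen_pow {k : ℕ} {v : Fin n →₀ ℕ} :
    IsMinMonGen (Ideal.span ((fun s => monomial s (1 : K)) '' {u | degSum u = k})) v ↔
      degSum v = k := by
  set J := Ideal.span ((fun s => monomial s (1 : K)) '' {u : Fin n →₀ ℕ | degSum u = k}) with hJ
  have hmono : ∀ w : Fin n →₀ ℕ, monomial w (1 : K) ∈ J ↔ k ≤ degSum w := by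
    intro w
    rw [hJ, mono_mem_span]
    constructor
    · rintro ⟨t, ht, htw⟩
      exact ht ▸ degSum_mono htw
    · intro h
      obtain ⟨t, htw, htd⟩ := exists_le_degSum (j := k) (degSum w) w rfl h
      exact ⟨t, htd, htw⟩
  constructor
  · rintro ⟨hv1, hv2⟩
    have hk : k ≤ degSum v := (hmono v).mp hv1
    rcases eq_or_lt_of_le hk with h | h
    · omega
    · exfalso
      obtain ⟨t, htv, htd⟩ := exists_le_degSum (j := k) (degSum v) v rfl (le_of_lt h)
      exact hv2 t htv (fun he => by rw [he] at htd; omega) ((hmono t).mpr (le_of_eq htd.symm))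
  · intro hv
    refine ⟨(hmono v).mpr (le_of_eq hv.symm), fun w hwv hwne hw => ?_⟩
    have h1 : degSum w < degSum v := degSum_strict_mono hwv hwne
    have h2 : k ≤ degSum w := (hmono w).mp hw
    omega

lemma muI_pow (hn : 1 ≤ n) (k : ℕ) :
    muI ((Ideal.span (Set.range (X : Fin n → MvPolynomial (Fin n) K))) ^ k) =
      (n + k - 1).choose (n - 1) := by
  classical
  set J := (Ideal.span (Set.range (X : Fin n → MvPolynomial (Fin n) K))) ^ k with hJ
  have hJs : J = Ideal.span ((fun s => monomial s (1 : K)) '' {u | degSum u = k}) := span_X_pow k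
  have hmin : {v | IsMinMonGen J v} = (↑(BkF n k) : Set (Fin n →₀ ℕ)) := by
    rw [coe_BkF]
    ext v
    simp only [Set.mem_setOf_eq, hJs]
    exact isMinMonGen_pow
  -- upper bound
  set s : Finset (MvPolynomial (Fin n) K) := (BkF n k).image (fun u => monomial u (1 : K))
    with hsdef
  have hspan : Ideal.span (s : Set (MvPolynomial (Fin n) K)) = J := by
    rw [hsdef, Finset.coe_image, coe_BkF, hJs]
  have hcard : s.card = (BkF n k).card :=
    Finset.card_image_of_injective _ (monomial_left_injective one_ne_zero)
  have hub : muI J ≤ (BkF n k).card := hcard ▸ muI_le s hspan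
  -- lower bound
  obtain ⟨t, htcard, htspan⟩ := muI_witness ⟨s, hspan⟩
  have hlb := minMonGen_card_le_span hJs (by rw [hmin]; exact (BkF n k).finite_toSet) t htspan
  rw [hmin, Set.ncard_coe_finset] at hlb
  rw [← card_BkF (n := n) (k := k) hn]
  omega

end PowMu

section Final
variable {K : Type} [Field K] {n : ℕ}

lemma coeff_filter_sum (f : MvPolynomial (Fin n) K) (P : (Fin n →₀ ℕ) → Prop)
    [DecidablePred P] (u : Fin n →₀ ℕ) :
    coeff u (∑ v ∈ f.support.filter P, monomial v (coeff v f)) =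
      if P u then coeff u f else 0 := by
  classical
  rw [coeff_sum]
  simp only [coeff_monomial]
  rw [Finset.sum_ite_eq' (f.support.filter P) u (fun v => coeff v f)]
  by_cases h : u ∈ f.support.filter P
  · rw [if_pos h, if_pos (Finset.mem_filter.mp h).2]
  · rw [if_neg h]
    by_cases hP : P u
    · rw [if_pos hP]
      by_cases hs : u ∈ f.support
      · exact absurd (Finset.mem_filter.mpr ⟨hs, hP⟩) h
      · exact (notMem_support_iff.mp hs).symm
    · rw [if_neg hP]



/-- Let `n ≥ 2` and let `I` be a graded ideal of `S = K[x₁,…,x_n]` containing `m^k`, where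
`m = (x₁,…,x_n)`, and let `<` be any monomial order. Then
`μ(I) ≤ μ(ini_<(I)) ≤ μ(m^k) = C(n+k-1, n-1)`, and `μ(I) = C(n+k-1, n-1)` iff `I = m^k`. -/
theorem stmt16 {K : Type} [Field K] {n : ℕ} (hn : 2 ≤ n) (k : ℕ)
    (lt : (Fin n →₀ ℕ) → (Fin n →₀ ℕ) → Prop) (hlt : IsMonOrder lt)
    (I : Ideal (MvPolynomial (Fin n) K))
    (hgraded : ∃ S : Set (MvPolynomial (Fin n) K),
      (∀ f ∈ S, ∃ d, MvPolynomial.IsHomogeneous f d) ∧ Ideal.span S = I)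
    (hmk :
      (Ideal.span (Set.range (MvPolynomial.X : Fin n → MvPolynomial (Fin n) K))) ^ k ≤ I) :
    muI I ≤ muI (iniIdeal lt I) ∧
    muI (iniIdeal lt I) ≤
      muI ((Ideal.span (Set.range (MvPolynomial.X : Fin n → MvPolynomial (Fin n) K))) ^ k) ∧
    muI ((Ideal.span (Set.range (MvPolynomial.X : Fin n → MvPolynomial (Fin n) K))) ^ k) =
      (n + k - 1).choose (n - 1) ∧
    (muI I = (n + k - 1).choose (n - 1) ↔
      I = (Ideal.span (Set.range (MvPolynomial.X : Fin n → MvPolynomial (Fin n) K))) ^ k) := by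
  classical
  have hn1 : 1 ≤ n := by omega
  set N := (n + k - 1).choose (n - 1) with hN
  set mI := (Ideal.span (Set.range (MvPolynomial.X : Fin n → MvPolynomial (Fin n) K))) ^ k
    with hmI
  have hmIs : mI = Ideal.span ((fun s => monomial s (1 : K)) '' {u | degSum u = k}) :=
    span_X_pow k
  set J := iniIdeal lt I with hJdef
  set Uall := {u : Fin n →₀ ℕ | ∃ f ∈ I, IsLeadMon lt f u} with hUall
  have hJs : J = Ideal.span ((fun s => monomial s (1 : K)) '' Uall) := iniIdeal_eq_span
  have hmkI : ∀ u : Fin n →₀ ℕ, degSum u = k → monomial u (1 : K) ∈ I := fun u hu =>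
    hmk (hmIs ▸ Ideal.subset_span ⟨u, hu, rfl⟩)
  have hmkJ : ∀ u : Fin n →₀ ℕ, degSum u = k → monomial u (1 : K) ∈ J := fun u hu =>
    mono_mem_iniIdeal hlt (hmkI u hu)
  set i₁ : Fin n := ⟨0, by omega⟩
  have hfin : {v | IsMinMonGen J v}.Finite := minMonGen_finite i₁ hmkJ
  set F := hfin.toFinset with hF
  set M₀ := {v | IsMinMonGen J v}.ncard with hM₀
  have hFcard : F.card = M₀ := (Set.ncard_eq_toFinset_card _ hfin).symm
  have hFmem : ∀ v, v ∈ F ↔ IsMinMonGen J v := fun v => hfin.mem_toFinset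
  -- J is generated by its minimal monomial generators
  have hJmin : J = Ideal.span ((fun s => monomial s (1 : K)) '' {v | IsMinMonGen J v}) :=
    span_minMonGen hJs
  -- μ(J) = M₀
  have hJub : muI J ≤ M₀ := by
    have hspan : Ideal.span ((F.image (fun u => monomial u (1 : K)) : Finset _) :
        Set (MvPolynomial (Fin n) K)) = J := by
      rw [Finset.coe_image, hJmin]
      congr 1
      have : (↑F : Set (Fin n →₀ ℕ)) = {v | IsMinMonGen J v} := by
        ext v; rw [Finset.mem_coe, hFmem]; rfl
      rw [this]
    have := muI_le _ hspan
    calc muI J ≤ (F.image (fun u => monomial u (1 : K))).card := this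
      _ ≤ F.card := Finset.card_image_le
      _ = M₀ := hFcard
  have hJlb : M₀ ≤ muI J := by
    obtain ⟨t, htcard, htspan⟩ := muI_witness (I := J) ⟨_, by
      rw [Finset.coe_image, hJmin]
      congr 1
      have : (↑F : Set (Fin n →₀ ℕ)) = {v | IsMinMonGen J v} := by
        ext v; rw [Finset.mem_coe, hFmem]; rfl
      rw [this]⟩
    rw [← htcard]
    exact minMonGen_card_le_span hJs hfin t htspan
  have hJmu : muI J = M₀ := le_antisymm hJub hJlb
  -- choose Groebner-type generators of I
  have hex : ∀ v, IsMinMonGen J v → ∃ f ∈ I, IsLeadMon lt f v := fun v hv =>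
    exists_leadMon_of_mono_mem_iniIdeal hlt hv.1
  set g : (Fin n →₀ ℕ) → MvPolynomial (Fin n) K := fun u =>
    if h : ∃ f ∈ I, IsLeadMon lt f u then h.choose else 0 with hg
  have hgspec : ∀ v, IsMinMonGen J v → g v ∈ I ∧ IsLeadMon lt (g v) v := by
    intro v hv
    have h := hex v hv
    rw [hg]
    simp only [dif_pos h]
    obtain ⟨hf1, hf2⟩ := h.choose_spec
    exact ⟨hf1, hf2⟩
  have hGspan : Ideal.span ((F.image g : Finset _) : Set (MvPolynomial (Fin n) K)) = I := by
    apply span_eq_of_leadMon_dominates hlt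
    · intro p hp
      simp only [Finset.coe_image, Set.mem_image, Finset.mem_coe] at hp
      obtain ⟨v, hv, rfl⟩ := hp
      exact (hgspec v ((hFmem v).mp hv)).1
    · intro f hf hf0 u hu
      have humem : monomial u (1 : K) ∈ J := by
        rw [hJdef]
        exact Ideal.subset_span ⟨f, hf, u, hu, rfl⟩
      rw [hJmin] at humem
      obtain ⟨v, hv, hvu⟩ := mono_mem_span.mp humem
      refine ⟨g v, ?_, v, (hgspec v hv).2, hvu⟩
      simp only [Finset.coe_image, Set.mem_image, Finset.mem_coe]
      exact ⟨v, (hFmem v).mpr hv, rfl⟩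
  have hIub : muI I ≤ M₀ := by
    calc muI I ≤ (F.image g).card := muI_le _ hGspan
      _ ≤ F.card := Finset.card_image_le
      _ = M₀ := hFcard
  -- counting bound
  have hM₀N : M₀ ≤ N := by
    have := minMonGen_card_le i₁ hmkJ
    rw [card_BkF hn1] at this
    exact this
  have hpow : muI mI = N := muI_pow hn1 k
  refine ⟨hJmu ▸ hIub, ?_, hpow, ?_, ?_⟩
  · rw [hJmu, hpow]; exact hM₀N
  · -- μ(I) = N → I = m^k
    intro hμ
    have hMN : M₀ = N := le_antisymm hM₀N (by omega)
    -- all min gens have degree exactly k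
    have hdeg : ∀ v, IsMinMonGen J v → degSum v = k := by
      intro v hv
      have hle := minMonGen_degSum_le hmkJ hv
      rcases eq_or_lt_of_le hle with h | h
      · exact h
      · exfalso
        have := minMonGen_card_lt hn hmkJ ⟨v, hv, h⟩
        rw [card_BkF hn1] at this
        omega
    have hMinEq : {v | IsMinMonGen J v} = {u : Fin n →₀ ℕ | degSum u = k} := by
      ext v
      simp only [Set.mem_setOf_eq]
      constructor
      · exact hdeg v
      · intro hvk
        refine ⟨hmkJ v hvk, fun w hwv hwne hw => ?_⟩
        obtain ⟨t, htw, ht⟩ := exists_minMonGen hJs w hw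
        have h1 := hdeg t ht
        have h2 := degSum_mono htw
        have h3 := degSum_strict_mono hwv hwne
        omega
    have hJeq : J = mI := by rw [hJmin, hMinEq, ← hmIs]
    -- now show I = m^k
    apply le_antisymm _ hmk
    intro f hf
    by_contra hfm
    set fhigh := ∑ v ∈ f.support.filter (fun u => k ≤ degSum u), monomial v (coeff v f)
      with hfhigh
    have hfhighmem : fhigh ∈ mI := by
      rw [hmIs]
      apply mem_ideal_span_monomial_image.mpr
      intro xi hxi
      have hcoeff : coeff xi fhigh ≠ 0 := mem_support_iff.mp hxi
      rw [hfhigh, coeff_filter_sum] at hcoeff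
      by_cases hP : k ≤ degSum xi
      · obtain ⟨t, htx, htd⟩ := exists_le_degSum (j := k) (degSum xi) xi rfl hP
        exact ⟨t, htd, htx⟩
      · rw [if_neg hP] at hcoeff; exact absurd rfl hcoeff
    set flow := f - fhigh with hflow
    have hflowI : flow ∈ I := I.sub_mem hf (hmk hfhighmem)
    have hflow0 : flow ≠ 0 := by
      intro h
      apply hfm
      have : f = fhigh := by
        rw [hflow] at h
        linear_combination (norm := ring_nf) h -- f - fhigh = 0 → f = fhigh
      rw [this]; exact hfhighmem
    obtain ⟨t, ht⟩ := exists_isLeadMon hlt hflow0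
    have htc : coeff t flow ≠ 0 := ht.1
    have htlow : degSum t < k := by
      by_contra hge
      push_neg at hge
      have : coeff t flow = 0 := by
        rw [hflow, coeff_sub, hfhigh, coeff_filter_sum, if_pos hge, sub_self]
      exact htc this
    have htJ : monomial t (1 : K) ∈ J := by
      rw [hJdef]
      exact Ideal.subset_span ⟨flow, hflowI, t, ht, rfl⟩
    rw [hJeq, hmIs] at htJ
    obtain ⟨s, hs, hst⟩ := mono_mem_span.mp htJ
    have := degSum_mono hst
    rw [hs] at this
    omega
  · intro h
    rw [h]; exact hpow
end Final
end
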